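/- Fix reals γ_t > 0, K_m ≥ 0 and K_I ≥ 0, and define A(v) = √(2·K_m·v/(v + γ_t)), B(v) = √(2·γ_t·K_I/(v + γ_t)), and p_LL(v) = 1 - Q(A(v), B(v)) + (γ_t/(v + γ_t))·exp(-(A(v)² + B(v)²)/2)·I₀(A(v)·B(v)) for v ≥ 0. Then p_LL is strictly decreasing on [0, ∞). -/

import Mathlib

open MeasureTheory Real Set

/-- Modified Bessel function of the first kind, order zero:
`I₀(x) = ∑ (x²/4)ⁿ / (n!)²`. -/
noncomputable def besselI0 (x : ℝ) : ℝ :=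
  ∑' n : ℕ, (x ^ 2 / 4) ^ n / ((Nat.factorial n : ℝ)) ^ 2

/-- First-order Marcum Q-function:
`Q(a,b) = ∫_b^∞ x · exp(-(x²+a²)/2) · I₀(a·x) dx`. -/
noncomputable def marcumQ (a b : ℝ) : ℝ :=
  ∫ x in Set.Ioi b, x * Real.exp (-(x ^ 2 + a ^ 2) / 2) * besselI0 (a * x)

/-- Normalized Rician fading density with Rician factor `K`. -/
noncomputable def ricianPDF (K h : ℝ) : ℝ :=
  (1 / 2) * Real.exp (-K - h / 2) * besselI0 (Real.sqrt (2 * K * h))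

/-- `A(v) = √(2·K_m·v/(v + γ_t))`. -/
noncomputable def Afun (Km γt v : ℝ) : ℝ := Real.sqrt (2 * Km * v / (v + γt))

/-- `B(v) = √(2·γ_t·K_I/(v + γ_t))`. -/
noncomputable def Bfun (KI γt v : ℝ) : ℝ := Real.sqrt (2 * γt * KI / (v + γt))

/-- Outage probability when both links are LoS, as a function of `v = β_m/β_I`. -/
noncomputable def pLL (γt Km KI v : ℝ) : ℝ :=
  1 - marcumQ (Afun Km γt v) (Bfun KI γt v) +
    (γt / (v + γt)) * Real.exp (-((Afun Km γt v) ^ 2 + (Bfun KI γt v) ^ 2) / 2) *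
      besselI0 (Afun Km γt v * Bfun KI γt v)

/-- Outage probability when both links are NLoS, as a function of `v = β_m/β_I`. -/
noncomputable def pNN (γt v : ℝ) : ℝ := γt / (v + γt)

open Filter Topology

namespace StmtAux

noncomputable def S (c : ℕ → ℝ) (y : ℝ) : ℝ := ∑' n, c n * y ^ n

noncomputable def c0 (n : ℕ) : ℝ := 1 / (n.factorial : ℝ)^2
noncomputable def c1 (n : ℕ) : ℝ := 1 / ((n.factorial : ℝ) * ((n+1).factorial : ℝ))
noncomputable def c2 (n : ℕ) : ℝ := 1 / ((n.factorial : ℝ) * ((n+2).factorial : ℝ))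

lemma fact_pos (n : ℕ) : (0:ℝ) < (n.factorial : ℝ) := by
  exact_mod_cast n.factorial_pos

lemma c0_pos (n : ℕ) : 0 < c0 n := by
  have := fact_pos n; unfold c0; positivity
lemma c1_pos (n : ℕ) : 0 < c1 n := by
  have := fact_pos n; have := fact_pos (n+1); unfold c1; positivity
lemma c2_pos (n : ℕ) : 0 < c2 n := by
  have := fact_pos n; have := fact_pos (n+2); unfold c2; positivity

lemma c1_le_c0 (n : ℕ) : c1 n ≤ c0 n := by
  unfold c0 c1
  rw [sq]
  have h1 := fact_pos n
  have h2 := fact_pos (n+1)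
  have h3 : (n.factorial : ℝ) ≤ ((n+1).factorial : ℝ) := by
    exact_mod_cast Nat.factorial_le (by omega)
  gcongr

lemma c2_le_c0 (n : ℕ) : c2 n ≤ c0 n := by
  unfold c0 c2
  rw [sq]
  have h1 := fact_pos n
  have h2 := fact_pos (n+2)
  have h3 : (n.factorial : ℝ) ≤ ((n+2).factorial : ℝ) := by
    exact_mod_cast Nat.factorial_le (by omega)
  gcongr

lemma c0_le_inv_fact (n : ℕ) : c0 n ≤ 1 / (n.factorial : ℝ) := by
  unfold c0
  rw [sq]
  have h1 := fact_pos n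
  have h2 : (1:ℝ) ≤ (n.factorial : ℝ) := by exact_mod_cast n.factorial_pos
  rw [div_le_div_iff₀ (by positivity) h1]
  nlinarith

lemma summable_aux {c : ℕ → ℝ} (hc : ∀ n, |c n| ≤ 1 / n.factorial) (y : ℝ) :
    Summable (fun n => c n * y ^ n) := by
  apply Summable.of_abs
  have h := Real.summable_pow_div_factorial |y|
  apply Summable.of_nonneg_of_le (fun n => abs_nonneg _) _ h
  intro n
  rw [abs_mul, abs_pow]
  calc |c n| * |y| ^ n ≤ (1 / n.factorial) * |y| ^ n := by
        gcongr; exact hc n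
    _ = |y| ^ n / n.factorial := by ring

lemma abs_c0 (n : ℕ) : |c0 n| ≤ 1 / n.factorial := by
  rw [abs_of_pos (c0_pos n)]; exact c0_le_inv_fact n
lemma abs_c1 (n : ℕ) : |c1 n| ≤ 1 / n.factorial := by
  rw [abs_of_pos (c1_pos n)]; exact (c1_le_c0 n).trans (c0_le_inv_fact n)
lemma abs_c2 (n : ℕ) : |c2 n| ≤ 1 / n.factorial := by
  rw [abs_of_pos (c2_pos n)]; exact (c2_le_c0 n).trans (c0_le_inv_fact n)

lemma summable_c0 (y : ℝ) : Summable (fun n => c0 n * y ^ n) := summable_aux abs_c0 y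
lemma summable_c1 (y : ℝ) : Summable (fun n => c1 n * y ^ n) := summable_aux abs_c1 y
lemma summable_c2 (y : ℝ) : Summable (fun n => c2 n * y ^ n) := summable_aux abs_c2 y


/-- generic derivative for these series -/
lemma hasDerivAt_S {c c' : ℕ → ℝ} (hc : ∀ n, |c n| ≤ 1 / n.factorial)
    (hc' : ∀ n, c' n = (n+1) * c (n+1)) (y : ℝ) :
    HasDerivAt (S c) (S c' y) y := by
  set R := |y| + 1 with hR
  have hR1 : 1 ≤ R := by have := abs_nonneg y; simp [hR]
  have hyR : y ∈ Metric.ball (0:ℝ) R := by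
    simp only [Metric.mem_ball, Real.dist_eq, sub_zero, hR]
    linarith
  set u : ℕ → ℝ := fun n => (n:ℝ) / n.factorial * R ^ (n-1) with hu_def
  have hu : Summable u := by
    rw [← summable_nat_add_iff 1]
    have h := Real.summable_pow_div_factorial R
    apply h.congr
    intro n
    have := fact_pos n
    simp only [hu_def, Nat.add_sub_cancel, Nat.factorial_succ]
    push_cast
    field_simp
  have hbound : ∀ (n : ℕ) (z : ℝ), z ∈ Metric.ball (0:ℝ) R →
      ‖(n:ℝ) * c n * z ^ (n-1)‖ ≤ u n := by
    intro n z hz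
    simp only [Metric.mem_ball, Real.dist_eq, sub_zero] at hz
    rw [Real.norm_eq_abs, abs_mul, abs_mul, abs_pow, Nat.abs_cast]
    have h0 : (0:ℝ) ≤ |z| := abs_nonneg z
    calc (n:ℝ) * |c n| * |z| ^ (n-1) ≤ (n:ℝ) * (1/n.factorial) * R ^ (n-1) := by
          gcongr
          exact hc n
      _ = u n := by simp only [hu_def]; ring
  have key : HasDerivAt (fun z => ∑' n, c n * z ^ n) (∑' n : ℕ, (n:ℝ) * c n * y ^ (n-1)) y := by
    exact hasDerivAt_tsum_of_isPreconnected hu (Metric.isOpen_ball)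
      (convex_ball (0:ℝ) R).isPreconnected
      (fun (n : ℕ) (z : ℝ) _ => by
        have h := (hasDerivAt_pow n z).const_mul (c n)
        exact h.congr_deriv (by ring))
      hbound hyR (summable_aux hc y) hyR
  have hsum' : Summable (fun n : ℕ => (n:ℝ) * c n * y ^ (n-1)) := by
    apply Summable.of_norm
    exact hu.of_nonneg_of_le (fun n => norm_nonneg _) (fun n => hbound n y hyR)
  have heq : (∑' n : ℕ, (n:ℝ) * c n * y ^ (n-1)) = S c' y := by
    show (∑' n : ℕ, (n:ℝ) * c n * y ^ (n-1)) = ∑' n, c' n * y ^ n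
    rw [Summable.tsum_eq_zero_add hsum']
    simp only [Nat.cast_zero, zero_mul, Nat.cast_add, Nat.cast_one, Nat.add_sub_cancel, zero_add]
    exact tsum_congr fun n => by rw [hc' n]
  exact heq ▸ key

end StmtAux

namespace StmtAux

noncomputable def g0 (y : ℝ) : ℝ := S c0 y
noncomputable def g1 (y : ℝ) : ℝ := S c1 y
noncomputable def g2 (y : ℝ) : ℝ := S c2 y

lemma c1_eq (n : ℕ) : c1 n = (n+1) * c0 (n+1) := by
  unfold c0 c1
  have h1 := fact_pos n
  have h2 := fact_pos (n+1)
  rw [Nat.factorial_succ]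
  push_cast
  field_simp

lemma c2_eq (n : ℕ) : c2 n = (n+1) * c1 (n+1) := by
  unfold c1 c2
  have h1 := fact_pos n
  have h2 := fact_pos (n+1)
  have h3 := fact_pos (n+2)
  rw [show n+1+1 = n+2 by ring, Nat.factorial_succ n]
  push_cast
  field_simp

lemma hasDerivAt_g0 (y : ℝ) : HasDerivAt g0 (g1 y) y :=
  hasDerivAt_S abs_c0 c1_eq y

lemma hasDerivAt_g1 (y : ℝ) : HasDerivAt g1 (g2 y) y :=
  hasDerivAt_S abs_c1 c2_eq y

lemma continuous_g0 : Continuous g0 :=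
  continuous_iff_continuousAt.2 fun y => (hasDerivAt_g0 y).continuousAt

lemma continuous_g1 : Continuous g1 :=
  continuous_iff_continuousAt.2 fun y => (hasDerivAt_g1 y).continuousAt

lemma c0_zero : c0 0 = 1 := by norm_num [c0]
lemma c1_zero : c1 0 = 1 := by norm_num [c1]

/-- the key Bessel-type identity `w·g2 w = g0 w - g1 w` -/
lemma g2_identity (w : ℝ) : w * g2 w = g0 w - g1 w := by
  have h0 := summable_c0 w
  have h1 := summable_c1 w
  have h2 := summable_c2 w
  have hsub : g0 w - g1 w = ∑' n, (c0 n * w ^ n - c1 n * w ^ n) :=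
    (Summable.tsum_sub h0 h1).symm
  rw [hsub, Summable.tsum_eq_zero_add (h0.sub h1)]
  have hfirst : c0 0 * w ^ 0 - c1 0 * w ^ 0 = 0 := by
    rw [c0_zero, c1_zero]; ring
  rw [hfirst, zero_add]
  have hterm : ∀ n : ℕ, c0 (n+1) * w ^ (n+1) - c1 (n+1) * w ^ (n+1) = w * (c2 n * w ^ n) := by
    intro n
    have key : c0 (n+1) - c1 (n+1) = c2 n := by
      unfold c0 c1 c2
      have h1 := fact_pos n
      have h2 := fact_pos (n+1)
      have h3 := fact_pos (n+2)
      have e1 : ((n+1).factorial : ℝ) = (n+1) * n.factorial := by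
        rw [Nat.factorial_succ]; push_cast; ring
      have e2 : ((n+2).factorial : ℝ) = (n+2) * ((n+1).factorial : ℝ) := by
        rw [show n+2 = (n+1)+1 by ring, Nat.factorial_succ]; push_cast; ring
      rw [e2, e1]
      field_simp
      ring
    rw [← key]
    ring
  rw [tsum_congr hterm, tsum_mul_left]
  rfl

/-- `(2n)! ≤ 4^n (n!)^2` -/
lemma two_mul_fact_le (n : ℕ) : ((2*n).factorial : ℝ) ≤ 4 ^ n * (n.factorial : ℝ)^2 := by
  induction n with
  | zero => norm_num
  | succ n ih =>
    have e : 2 * (n+1) = (2*n) + 1 + 1 := by ring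
    rw [e, Nat.factorial_succ, Nat.factorial_succ]
    push_cast
    have h : ((2*n+1 : ℕ) : ℝ) + 1 = 2*(n:ℝ)+2 := by push_cast; ring
    have hfn := fact_pos (2*n)
    have hn : (0:ℝ) ≤ (n:ℝ) := Nat.cast_nonneg n
    have hsucc : (((n+1)).factorial : ℝ) = ((n:ℝ)+1) * (n.factorial : ℝ) := by
      rw [Nat.factorial_succ]; push_cast; ring
    rw [hsucc]
    have h4 : (0:ℝ) < 4^n := pow_pos (by norm_num) n
    calc (2*(n:ℝ)+1+1) * ((2*(n:ℝ)+1) * ((2*n).factorial:ℝ))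
        ≤ (2*(n:ℝ)+2)*((2*(n:ℝ)+2) * ((2*n).factorial:ℝ)) := by nlinarith [hfn]
      _ ≤ (2*(n:ℝ)+2)*((2*(n:ℝ)+2) * (4^n*(n.factorial:ℝ)^2)) := by
          have h2 : (0:ℝ) ≤ 2*(n:ℝ)+2 := by linarith
          gcongr
      _ = 4 ^ (n+1) * (((n:ℝ) + 1) * (n.factorial:ℝ)) ^ 2 := by ring

lemma exp_eq_tsum_real (x : ℝ) : Real.exp x = ∑' n : ℕ, x ^ n / n.factorial := by
  rw [Real.exp_eq_exp_ℝ]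
  rw [NormedSpace.exp_eq_tsum_div]

lemma g0_le_exp {y : ℝ} (hy : 0 ≤ y) : g0 y ≤ Real.exp (2 * Real.sqrt y) := by
  set x := 2 * Real.sqrt y with hx
  have hx0 : 0 ≤ x := by positivity
  rw [exp_eq_tsum_real]
  have hterm : ∀ n : ℕ, c0 n * y ^ n ≤ x ^ (2*n) / ((2*n).factorial : ℝ) := by
    intro n
    have hyx : y ^ n = (Real.sqrt y) ^ (2*n) := by
      rw [pow_mul, Real.sq_sqrt hy]
    have hx2 : x ^ (2*n) = 4 ^ n * (Real.sqrt y) ^ (2*n) := by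
      rw [hx, mul_pow, pow_mul]
      norm_num
    rw [hyx, hx2, c0]
    have h1 := fact_pos n
    have h2 := fact_pos (2*n)
    have h3 := two_mul_fact_le n
    have hs : (0:ℝ) ≤ (Real.sqrt y) ^ (2*n) := by positivity
    rw [div_mul_eq_mul_div, mul_div_assoc, one_mul, div_le_div_iff₀ (by positivity) h2]
    nlinarith [mul_le_mul_of_nonneg_right h3 hs]
  have hsum1 : Summable (fun n : ℕ => c0 n * y ^ n) := summable_c0 y
  have hsum2 : Summable (fun n : ℕ => x ^ n / (n.factorial : ℝ)) := by
    have := Real.summable_pow_div_factorial x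
    exact this
  calc g0 y = ∑' n, c0 n * y ^ n := rfl
    _ ≤ ∑' n : ℕ, x ^ n / (n.factorial : ℝ) := by
        apply Summable.tsum_le_tsum_of_inj (fun n => 2*n)
        · intro a b hab; simp only [] at hab; omega
        · intro c _; positivity
        · exact hterm
        · exact hsum1
        · exact hsum2

end StmtAux

namespace StmtAux

lemma g0_nonneg {y : ℝ} (hy : 0 ≤ y) : 0 ≤ g0 y :=
  tsum_nonneg fun n => by have := (c0_pos n).le; positivity

lemma g1_nonneg {y : ℝ} (hy : 0 ≤ y) : 0 ≤ g1 y :=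
  tsum_nonneg fun n => by have := (c1_pos n).le; positivity

lemma one_le_g0 {y : ℝ} (hy : 0 ≤ y) : 1 ≤ g0 y := by
  have h := Summable.le_tsum (summable_c0 y) 0 (fun n _ => by have := (c0_pos n).le; positivity)
  simpa [c0_zero, g0, S] using h

lemma g0_pos {y : ℝ} (hy : 0 ≤ y) : 0 < g0 y := lt_of_lt_of_le one_pos (one_le_g0 hy)

lemma g0_mono {y y' : ℝ} (hy : 0 ≤ y) (h : y ≤ y') : g0 y ≤ g0 y' := by
  apply Summable.tsum_le_tsum _ (summable_c0 y) (summable_c0 y')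
  intro n
  have := (c0_pos n).le
  gcongr

lemma abs_S_le {c : ℕ → ℝ} (hc : ∀ n, |c n| ≤ c0 n) (w : ℝ) : |S c w| ≤ g0 |w| := by
  have hsc : Summable (fun n => c n * w ^ n) :=
    summable_aux (fun n => (hc n).trans (c0_le_inv_fact n)) w
  calc |S c w| ≤ ∑' n, ‖c n * w ^ n‖ := norm_tsum_le_tsum_norm hsc.norm
    _ ≤ ∑' n, c0 n * |w| ^ n := by
        apply Summable.tsum_le_tsum _ hsc.norm (summable_c0 |w|)
        intro n
        rw [Real.norm_eq_abs, abs_mul, abs_pow]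
        gcongr
        exact hc n
    _ = g0 |w| := rfl

lemma abs_g0_le (w : ℝ) : |g0 w| ≤ g0 |w| :=
  abs_S_le (fun n => by rw [abs_of_pos (c0_pos n)]) w

lemma abs_g1_le (w : ℝ) : |g1 w| ≤ g0 |w| :=
  abs_S_le (fun n => by rw [abs_of_pos (c1_pos n)]; exact c1_le_c0 n) w

section KmKI

variable {Km KI : ℝ}

noncomputable def αf (Km t : ℝ) : ℝ := 2*Km*(1-t)
noncomputable def βf (KI t : ℝ) : ℝ := 2*KI*t
noncomputable def wf (Km KI t u : ℝ) : ℝ := αf Km t * (u + βf KI t)/4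
noncomputable def Hf (Km KI t u : ℝ) : ℝ :=
  Real.exp (-(u + αf Km t + βf KI t)/2) * g0 (wf Km KI t u)
noncomputable def Hf' (Km KI t u : ℝ) : ℝ :=
  Real.exp (-(u + αf Km t + βf KI t)/2) *
    ((Km - KI) * g0 (wf Km KI t u) + ((KI * αf Km t - Km*(u + βf KI t))/2) * g1 (wf Km KI t u))
noncomputable def Pf (Km KI t u : ℝ) : ℝ :=
  Real.exp (-(u + αf Km t + βf KI t)/2) *
    (2*KI * g0 (wf Km KI t u) + Km*(u + βf KI t) * g1 (wf Km KI t u))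

/-- decay comparison function -/
noncomputable def dcy (u : ℝ) : ℝ := Real.exp (-(1/8) * u)

lemma hasDerivAt_Hf (hKm : 0 ≤ Km) (t u : ℝ) :
    HasDerivAt (fun t => Hf Km KI t u) (Hf' Km KI t u) t := by
  have hL : HasDerivAt (fun t : ℝ => -(u + αf Km t + βf KI t)/2) (Km - KI) t := by
    have h : HasDerivAt (fun t : ℝ => -(u + 2*Km*(1-t) + 2*KI*t)/2) (Km - KI) t := by
      have h1 : HasDerivAt (fun t : ℝ => -(u + 2*Km*(1-t) + 2*KI*t)/2)
          ((-(0 + 2*Km*(0-1) + 2*KI*1)/2)) t := by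
        apply HasDerivAt.div_const
        apply HasDerivAt.neg
        exact ((hasDerivAt_const t u).add
          (((hasDerivAt_const t (1:ℝ)).sub (hasDerivAt_id t)).const_mul (2*Km))).add
          ((hasDerivAt_id t).const_mul (2*KI))
      convert h1 using 1
      ring
    exact h
  have hw : HasDerivAt (fun t => wf Km KI t u) ((KI * αf Km t - Km*(u + βf KI t))/2) t := by
    have h1 : HasDerivAt (fun t : ℝ => 2*Km*(1-t)) (-(2*Km)) t := by
      have := ((hasDerivAt_const t (1:ℝ)).sub (hasDerivAt_id t)).const_mul (2*Km)
      exact this.congr_deriv (by ring)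
    have h2 : HasDerivAt (fun t : ℝ => u + 2*KI*t) (2*KI) t := by
      have := (hasDerivAt_const t u).add ((hasDerivAt_id t).const_mul (2*KI))
      exact this.congr_deriv (by ring)
    have h3 := (h1.mul h2).div_const 4
    have : HasDerivAt (fun t : ℝ => 2*Km*(1-t) * (u + 2*KI*t)/4)
        ((-(2*Km) * (u + 2*KI*t) + 2*Km*(1-t) * (2*KI))/4) t := h3
    refine this.congr_deriv ?_
    unfold αf βf; ring
  have hg := (hasDerivAt_g0 (wf Km KI t u)).comp t hw
  have hexp := hL.exp
  have := hexp.mul hg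
  refine this.congr_deriv ?_
  simp only [Hf', Function.comp]
  ring

lemma hasDerivAt_Pf (t u : ℝ) :
    HasDerivAt (fun u => Pf Km KI t u) (Hf' Km KI t u) u := by
  have hL : HasDerivAt (fun u : ℝ => -(u + αf Km t + βf KI t)/2) (-(1/2)) u := by
    have h1 : HasDerivAt (fun u : ℝ => u + αf Km t + βf KI t) 1 u := by
      simpa using ((hasDerivAt_id u).add_const (αf Km t)).add_const (βf KI t)
    have := (h1.neg).div_const 2
    exact this.congr_deriv (by ring)
  have hw : HasDerivAt (fun u => wf Km KI t u) (αf Km t / 4) u := by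
    have h1 : HasDerivAt (fun u : ℝ => u + βf KI t) 1 u := (hasDerivAt_id u).add_const _
    have := (h1.const_mul (αf Km t)).div_const 4
    exact this.congr_deriv (by ring)
  have hg0 := (hasDerivAt_g0 (wf Km KI t u)).comp u hw
  have hg1 := (hasDerivAt_g1 (wf Km KI t u)).comp u hw
  have hbr : HasDerivAt (fun u => 2*KI * g0 (wf Km KI t u) + Km*(u + βf KI t) * g1 (wf Km KI t u))
      (2*KI * (g1 (wf Km KI t u) * (αf Km t / 4)) +
        (Km * (g1 (wf Km KI t u)) + Km*(u + βf KI t) * (g2 (wf Km KI t u) * (αf Km t / 4)))) u := by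
    apply HasDerivAt.add
    · exact hg0.const_mul (2*KI)
    · have hlin : HasDerivAt (fun u : ℝ => Km*(u + βf KI t)) Km u := by
        have := ((hasDerivAt_id u).add_const (βf KI t)).const_mul Km
        exact this.congr_deriv (by ring)
      exact hlin.mul hg1
  have hPexp := hL.exp
  have := hPexp.mul hbr
  refine this.congr_deriv ?_
  have hid := g2_identity (wf Km KI t u)
  have hkey : Km*(u + βf KI t) * (g2 (wf Km KI t u) * (αf Km t / 4))
      = Km * g0 (wf Km KI t u) - Km * g1 (wf Km KI t u) := by
    have h5 : Km*(u + βf KI t) * (g2 (wf Km KI t u) * (αf Km t / 4))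
        = Km * (wf Km KI t u * g2 (wf Km KI t u)) := by
      unfold wf; ring
    rw [h5, hid]; ring
  simp only [Hf', Function.comp]
  rw [hkey]
  ring

end KmKI

end StmtAux

namespace StmtAux

section Bounds

variable {Km KI : ℝ}

/-- `2√(Km(u+4K_I)/2) ≤ 2Km + 2√(2KmKI) + u/4` -/
lemma sqrt_bound (hKm : 0 ≤ Km) (hKI : 0 ≤ KI) {u : ℝ} (hu : 0 ≤ u) :
    2 * Real.sqrt (Km*(u+4*KI)/2) ≤ 2*Km + 2*Real.sqrt (2*Km*KI) + u/4 := by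
  set s := Real.sqrt (2*Km*KI) with hs
  have hs0 : 0 ≤ s := Real.sqrt_nonneg _
  have hs2 : s^2 = 2*Km*KI := Real.sq_sqrt (by positivity)
  have hM : Real.sqrt (Km*(u+4*KI)/2) ≤ Km + s + u/8 := by
    have h1 : Km*(u+4*KI)/2 ≤ (Km + s + u/8)^2 := by
      nlinarith [sq_nonneg (Km - u/8), sq_nonneg s, mul_nonneg hKm hu, mul_nonneg hs0 hu, mul_nonneg hKm hs0]
    calc Real.sqrt (Km*(u+4*KI)/2) ≤ Real.sqrt ((Km + s + u/8)^2) := Real.sqrt_le_sqrt h1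
      _ = Km + s + u/8 := Real.sqrt_sq (by positivity)
  linarith

/-- uniform bound on `|g0 (wf)|` and `|g1 (wf)|` for `t ∈ [0,2]`, `u ≥ 0`. -/
lemma g_wf_bound (hKm : 0 ≤ Km) (hKI : 0 ≤ KI) {t u : ℝ} (ht : t ∈ Icc (0:ℝ) 2) (hu : 0 ≤ u) :
    |g0 (wf Km KI t u)| ≤ Real.exp (2*Km + 2*Real.sqrt (2*Km*KI)) * Real.exp (u/4) ∧
    |g1 (wf Km KI t u)| ≤ Real.exp (2*Km + 2*Real.sqrt (2*Km*KI)) * Real.exp (u/4) := by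
  obtain ⟨ht0, ht2⟩ := ht
  have hβ0 : 0 ≤ βf KI t := by unfold βf; positivity
  have hβ4 : βf KI t ≤ 4*KI := by unfold βf; nlinarith
  have hwabs : |wf Km KI t u| ≤ Km*(u+4*KI)/2 := by
    unfold wf
    rw [abs_div, abs_mul]
    have h1 : |αf Km t| ≤ 2*Km := by
      unfold αf
      rw [abs_mul, abs_of_nonneg (by positivity : (0:ℝ) ≤ 2*Km)]
      have : |1 - t| ≤ 1 := by rw [abs_le]; constructor <;> linarith
      nlinarith
    have h2 : |u + βf KI t| ≤ u + 4*KI := by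
      rw [abs_of_nonneg (by linarith)]; linarith
    have h3 : (0:ℝ) ≤ |u + βf KI t| := abs_nonneg _
    calc |αf Km t| * |u + βf KI t| / |(4:ℝ)|
        ≤ 2*Km * (u + 4*KI) / 4 := by
          rw [show |(4:ℝ)| = 4 by norm_num]
          gcongr
      _ = Km*(u+4*KI)/2 := by ring
  have hg0w : g0 |wf Km KI t u| ≤ Real.exp (2*Km + 2*Real.sqrt (2*Km*KI)) * Real.exp (u/4) := by
    calc g0 |wf Km KI t u| ≤ g0 (Km*(u+4*KI)/2) := g0_mono (abs_nonneg _) hwabs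
      _ ≤ Real.exp (2 * Real.sqrt (Km*(u+4*KI)/2)) := g0_le_exp (by positivity)
      _ ≤ Real.exp (2*Km + 2*Real.sqrt (2*Km*KI) + u/4) :=
          Real.exp_le_exp.2 (sqrt_bound hKm hKI hu)
      _ = _ := by rw [← Real.exp_add]
  exact ⟨(abs_g0_le _).trans hg0w, (abs_g1_le _).trans hg0w⟩

lemma exp_factor_bound (hKm : 0 ≤ Km) (hKI : 0 ≤ KI) {t u : ℝ} (ht : t ∈ Icc (0:ℝ) 2) :
    Real.exp (-(u + αf Km t + βf KI t)/2) ≤ Real.exp Km * Real.exp (-u/2) := by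
  rw [← Real.exp_add, Real.exp_le_exp]
  have h1 : -2*Km ≤ αf Km t := by
    unfold αf
    nlinarith [ht.1, ht.2]
  have h2 : 0 ≤ βf KI t := by unfold βf; nlinarith [ht.1]
  linarith

/-- linear-growth absorbed into `exp (u/8)`: `a + b*u ≤ (a + 8*b) * exp (u/8)` -/
lemma linear_absorb {a b u : ℝ} (ha : 0 ≤ a) (hb : 0 ≤ b) (hu : 0 ≤ u) :
    a + b*u ≤ (a + 8*b) * Real.exp (u/8) := by
  have h1 : (1:ℝ) ≤ Real.exp (u/8) := Real.one_le_exp (by positivity)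
  have h2 : u/8 ≤ Real.exp (u/8) := (Real.add_one_le_exp (u/8)).trans' (by linarith)
  nlinarith

/-- the master bound constant -/
noncomputable def Cb (Km KI : ℝ) : ℝ :=
  Real.exp Km * Real.exp (2*Km + 2*Real.sqrt (2*Km*KI)) *
    (1 + (|Km - KI| + Km*KI + 2*Km*KI) + 2*KI + 4*Km*KI + 8*(Km/2 + Km))

lemma Cb_nonneg (hKm : 0 ≤ Km) (hKI : 0 ≤ KI) : 0 ≤ Cb Km KI := by
  unfold Cb
  have := abs_nonneg (Km - KI)
  positivity

lemma master_bound (hKm : 0 ≤ Km) (hKI : 0 ≤ KI) {t u : ℝ}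
    (ht : t ∈ Icc (0:ℝ) 2) (hu : 0 ≤ u) :
    |Hf Km KI t u| ≤ Cb Km KI * dcy u ∧ |Hf' Km KI t u| ≤ Cb Km KI * dcy u ∧
      |Pf Km KI t u| ≤ Cb Km KI * dcy u := by
  obtain ⟨hg0w, hg1w⟩ := g_wf_bound hKm hKI ht hu
  have hef := exp_factor_bound hKm hKI (u := u) ht
  have hef0 : 0 ≤ Real.exp (-(u + αf Km t + βf KI t)/2) := (Real.exp_pos _).le
  set E := Real.exp (2*Km + 2*Real.sqrt (2*Km*KI)) with hE
  have hE0 : 0 ≤ E := (Real.exp_pos _).le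
  have hβ0 : 0 ≤ βf KI t := by unfold βf; nlinarith [ht.1]
  have hβ4 : βf KI t ≤ 4*KI := by unfold βf; nlinarith [ht.1, ht.2]
  have hα : |αf Km t| ≤ 2*Km := by
    unfold αf
    rw [abs_mul, abs_of_nonneg (by positivity : (0:ℝ) ≤ 2*Km)]
    have : |1 - t| ≤ 1 := by rw [abs_le]; constructor <;> [linarith [ht.2]; linarith [ht.1]]
    nlinarith
  -- generic combination
  have combo : ∀ a b : ℝ, 0 ≤ a → 0 ≤ b →
      Real.exp (-(u + αf Km t + βf KI t)/2) * ((a + b*u) * (E * Real.exp (u/4)))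
        ≤ (Real.exp Km * E * (a + 8*b)) * dcy u := by
    intro a b ha hb
    have h1 : Real.exp (-(u + αf Km t + βf KI t)/2) * ((a + b*u) * (E * Real.exp (u/4)))
        ≤ (Real.exp Km * Real.exp (-u/2)) * (((a + 8*b) * Real.exp (u/8)) * (E * Real.exp (u/4))) := by
      have hab := linear_absorb ha hb hu
      have h8 : (0:ℝ) ≤ Real.exp (u/8) := (Real.exp_pos _).le
      have hEx : (0:ℝ) ≤ E * Real.exp (u/4) := by positivity
      have hAB : 0 ≤ a + b*u := by positivity
      exact mul_le_mul hef (by nlinarith) (by positivity) (by positivity)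
    calc _ ≤ _ := h1
      _ = (Real.exp Km * E * (a + 8*b)) * (Real.exp (-u/2) * Real.exp (u/8) * Real.exp (u/4)) := by
          ring
      _ ≤ (Real.exp Km * E * (a + 8*b)) * dcy u := by
          have hone : Real.exp (-u/2) * Real.exp (u/8) * Real.exp (u/4) ≤ dcy u := by
            rw [← Real.exp_add, ← Real.exp_add]
            unfold dcy
            exact Real.exp_le_exp.2 (by linarith)
          have h0 : 0 ≤ Real.exp Km * E * (a + 8*b) := by positivity
          exact mul_le_mul_of_nonneg_left hone h0
  set X := E * Real.exp (u/4) with hX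
  have hX0 : 0 ≤ X := by
    have := Real.exp_pos (u/4)
    nlinarith
  have hCb : ∀ c : ℝ, c ≤ 1 + (|Km - KI| + Km*KI + 2*Km*KI) + 2*KI + 4*Km*KI + 8*(Km/2 + Km) →
      Real.exp Km * E * c * dcy u ≤ Cb Km KI * dcy u := by
    intro c hc
    have hd : 0 ≤ dcy u := (Real.exp_pos _).le
    have hEK : 0 ≤ Real.exp Km * E := mul_nonneg (Real.exp_pos _).le hE0
    have h2 : Real.exp Km * E * c
        ≤ Real.exp Km * E * (1 + (|Km - KI| + Km*KI + 2*Km*KI) + 2*KI + 4*Km*KI + 8*(Km/2 + Km)) :=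
      mul_le_mul_of_nonneg_left hc hEK
    refine (mul_le_mul_of_nonneg_right h2 hd).trans ?_
    unfold Cb
    rw [← hE]
  have habsKK : (0:ℝ) ≤ |Km - KI| := abs_nonneg _
  refine ⟨?_, ?_, ?_⟩
  · -- Hf
    have h := combo 1 0 zero_le_one le_rfl
    calc |Hf Km KI t u| = Real.exp (-(u + αf Km t + βf KI t)/2) * |g0 (wf Km KI t u)| := by
          unfold Hf; rw [abs_mul, abs_of_nonneg hef0]
      _ ≤ Real.exp (-(u + αf Km t + βf KI t)/2) * ((1 + 0*u) * X) := by
          apply mul_le_mul_of_nonneg_left _ hef0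
          calc |g0 (wf Km KI t u)| ≤ X := hg0w
            _ = (1 + 0*u) * X := by ring
      _ ≤ (Real.exp Km * E * (1 + 8*0)) * dcy u := h
      _ ≤ Cb Km KI * dcy u := hCb _ (by nlinarith [mul_nonneg hKm hKI, mul_nonneg hKm hKI])
  · -- Hf'
    have h := combo (|Km - KI| + Km*KI + 2*Km*KI) (Km/2)
      (by positivity) (by positivity)
    have hco : |(KI * αf Km t - Km*(u + βf KI t))/2| ≤ (Km*KI + 2*Km*KI) + (Km/2)*u := by
      rw [abs_div, show |(2:ℝ)| = 2 by norm_num, div_le_iff₀ (by norm_num : (0:ℝ) < 2)]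
      calc |KI * αf Km t - Km*(u + βf KI t)| ≤ |KI * αf Km t| + |Km*(u + βf KI t)| := abs_sub _ _
        _ ≤ KI * (2*Km) + Km * (u + 4*KI) := by
            rw [abs_mul, abs_mul, abs_of_nonneg hKI, abs_of_nonneg hKm,
              abs_of_nonneg (by linarith : (0:ℝ) ≤ u + βf KI t)]
            have h2 : u + βf KI t ≤ u + 4*KI := by linarith
            have := mul_le_mul_of_nonneg_left hα hKI
            have := mul_le_mul_of_nonneg_left h2 hKm
            linarith
        _ = ((Km*KI + 2*Km*KI) + (Km/2)*u) * 2 := by ring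
    have hbr : |(Km - KI) * g0 (wf Km KI t u) +
        ((KI * αf Km t - Km*(u + βf KI t))/2) * g1 (wf Km KI t u)|
        ≤ ((|Km - KI| + Km*KI + 2*Km*KI) + (Km/2)*u) * X := by
      calc |(Km - KI) * g0 (wf Km KI t u) + ((KI * αf Km t - Km*(u + βf KI t))/2) * g1 (wf Km KI t u)|
          ≤ |Km - KI| * |g0 (wf Km KI t u)| + |(KI * αf Km t - Km*(u + βf KI t))/2| * |g1 (wf Km KI t u)| := by
            refine (abs_add_le _ _).trans ?_
            rw [abs_mul, abs_mul]
        _ ≤ |Km - KI| * X + ((Km*KI + 2*Km*KI) + (Km/2)*u) * |g1 (wf Km KI t u)| := by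
            have h1 := mul_le_mul_of_nonneg_left hg0w habsKK
            have h2 := mul_le_mul_of_nonneg_right hco (abs_nonneg (g1 (wf Km KI t u)))
            linarith
        _ ≤ |Km - KI| * X + ((Km*KI + 2*Km*KI) + (Km/2)*u) * X := by
            have hc0 : (0:ℝ) ≤ (Km*KI + 2*Km*KI) + (Km/2)*u := by positivity
            have := mul_le_mul_of_nonneg_left hg1w hc0
            linarith
        _ = ((|Km - KI| + Km*KI + 2*Km*KI) + (Km/2)*u) * X := by ring
    calc |Hf' Km KI t u| = Real.exp (-(u + αf Km t + βf KI t)/2) *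
          |(Km - KI) * g0 (wf Km KI t u) +
            ((KI * αf Km t - Km*(u + βf KI t))/2) * g1 (wf Km KI t u)| := by
          unfold Hf'; rw [abs_mul, abs_of_nonneg hef0]
      _ ≤ Real.exp (-(u + αf Km t + βf KI t)/2) *
          (((|Km - KI| + Km*KI + 2*Km*KI) + (Km/2)*u) * X) :=
          mul_le_mul_of_nonneg_left hbr hef0
      _ ≤ (Real.exp Km * E * ((|Km - KI| + Km*KI + 2*Km*KI) + 8*(Km/2))) * dcy u := h
      _ ≤ Cb Km KI * dcy u := hCb _ (by nlinarith [mul_nonneg hKm hKI, mul_nonneg hKm hKI])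
  · -- Pf
    have h := combo (2*KI + 4*Km*KI) Km (by positivity) hKm
    have hbr : |2*KI * g0 (wf Km KI t u) + Km*(u + βf KI t) * g1 (wf Km KI t u)|
        ≤ ((2*KI + 4*Km*KI) + Km*u) * X := by
      have hc2 : |Km*(u + βf KI t)| ≤ 4*Km*KI + Km*u := by
        rw [abs_mul, abs_of_nonneg hKm, abs_of_nonneg (by linarith : (0:ℝ) ≤ u + βf KI t)]
        have h2 : u + βf KI t ≤ u + 4*KI := by linarith
        nlinarith
      calc |2*KI * g0 (wf Km KI t u) + Km*(u + βf KI t) * g1 (wf Km KI t u)|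
          ≤ 2*KI * |g0 (wf Km KI t u)| + |Km*(u + βf KI t)| * |g1 (wf Km KI t u)| := by
            have e1 : |2*KI * g0 (wf Km KI t u)| = 2*KI * |g0 (wf Km KI t u)| := by
              rw [abs_mul, abs_of_nonneg (by positivity : (0:ℝ) ≤ 2*KI)]
            have e2 : |Km*(u + βf KI t) * g1 (wf Km KI t u)|
                = |Km*(u + βf KI t)| * |g1 (wf Km KI t u)| := abs_mul _ _
            exact (abs_add_le _ _).trans (by rw [e1, e2])
        _ ≤ 2*KI * X + (4*Km*KI + Km*u) * |g1 (wf Km KI t u)| := by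
            have h1 := mul_le_mul_of_nonneg_left hg0w (by positivity : (0:ℝ) ≤ 2*KI)
            have h2 := mul_le_mul_of_nonneg_right hc2 (abs_nonneg (g1 (wf Km KI t u)))
            linarith
        _ ≤ 2*KI * X + (4*Km*KI + Km*u) * X := by
            have hc0 : (0:ℝ) ≤ 4*Km*KI + Km*u := by positivity
            have := mul_le_mul_of_nonneg_left hg1w hc0
            linarith
        _ = ((2*KI + 4*Km*KI) + Km*u) * X := by ring
    calc |Pf Km KI t u| = Real.exp (-(u + αf Km t + βf KI t)/2) *
          |2*KI * g0 (wf Km KI t u) + Km*(u + βf KI t) * g1 (wf Km KI t u)| := by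
          unfold Pf; rw [abs_mul, abs_of_nonneg hef0]
      _ ≤ Real.exp (-(u + αf Km t + βf KI t)/2) * (((2*KI + 4*Km*KI) + Km*u) * X) :=
          mul_le_mul_of_nonneg_left hbr hef0
      _ ≤ (Real.exp Km * E * ((2*KI + 4*Km*KI) + 8*Km)) * dcy u := h
      _ ≤ Cb Km KI * dcy u := hCb _ (by nlinarith [mul_nonneg hKm hKI, mul_nonneg hKm hKI])

end Bounds

end StmtAux

namespace StmtAux

section Main

variable {Km KI : ℝ}

lemma integrable_dcy (C : ℝ) : IntegrableOn (fun u => C * dcy u) (Ioi (0:ℝ)) := by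
  unfold dcy
  have h := exp_neg_integrableOn_Ioi (0:ℝ) (show (0:ℝ) < 1/8 by norm_num)
  exact (h.congr_fun (fun u _ => by ring_nf) measurableSet_Ioi).const_mul C

lemma continuous_Hf_u (t : ℝ) : Continuous (fun u => Hf Km KI t u) := by
  unfold Hf wf
  exact (Real.continuous_exp.comp (by fun_prop)).mul (continuous_g0.comp (by fun_prop))

lemma continuous_Hf'_u (t : ℝ) : Continuous (fun u => Hf' Km KI t u) := by
  unfold Hf' wf
  exact (Real.continuous_exp.comp (by fun_prop)).mul
    (((continuous_const).mul (continuous_g0.comp (by fun_prop))).add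
      ((by fun_prop : Continuous fun u : ℝ => (KI * αf Km t - Km*(u + βf KI t))/2).mul
        (continuous_g1.comp (by fun_prop))))

lemma integrableOn_Hf (hKm : 0 ≤ Km) (hKI : 0 ≤ KI) {t : ℝ} (ht : t ∈ Icc (0:ℝ) 2) :
    IntegrableOn (Hf Km KI t) (Ioi (0:ℝ)) := by
  apply Integrable.mono' (integrable_dcy (Cb Km KI)) (continuous_Hf_u t).aestronglyMeasurable
  rw [ae_restrict_iff' measurableSet_Ioi]
  exact ae_of_all _ fun u hu => by
    rw [Real.norm_eq_abs]
    exact (master_bound hKm hKI ht (le_of_lt hu)).1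

lemma integrableOn_Hf' (hKm : 0 ≤ Km) (hKI : 0 ≤ KI) {t : ℝ} (ht : t ∈ Icc (0:ℝ) 2) :
    IntegrableOn (Hf' Km KI t) (Ioi (0:ℝ)) := by
  apply Integrable.mono' (integrable_dcy (Cb Km KI)) (continuous_Hf'_u t).aestronglyMeasurable
  rw [ae_restrict_iff' measurableSet_Ioi]
  exact ae_of_all _ fun u hu => by
    rw [Real.norm_eq_abs]
    exact (master_bound hKm hKI ht (le_of_lt hu)).2.1

lemma tendsto_Pf (hKm : 0 ≤ Km) (hKI : 0 ≤ KI) {t : ℝ} (ht : t ∈ Icc (0:ℝ) 2) :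
    Tendsto (fun u => Pf Km KI t u) atTop (𝓝 0) := by
  have h1 : Tendsto (fun u : ℝ => u / 8) atTop atTop :=
    tendsto_id.atTop_div_const (by norm_num)
  have h2 := Real.tendsto_exp_neg_atTop_nhds_zero.comp h1
  have h3 : Tendsto (fun u : ℝ => dcy u) atTop (𝓝 0) := by
    apply h2.congr
    intro u
    unfold dcy
    simp only [Function.comp]
    ring_nf
  have hg : Tendsto (fun u : ℝ => Cb Km KI * dcy u) atTop (𝓝 0) := by
    have := h3.const_mul (Cb Km KI)
    simpa using this
  apply squeeze_zero_norm' ((eventually_ge_atTop (0:ℝ)).mono fun u hu => ?_) hg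
  rw [Real.norm_eq_abs]
  exact (master_bound hKm hKI ht hu).2.2

lemma integral_Hf'_eq (hKm : 0 ≤ Km) (hKI : 0 ≤ KI) {t : ℝ} (ht : t ∈ Icc (0:ℝ) 2) :
    ∫ u in Ioi (0:ℝ), Hf' Km KI t u = - Pf Km KI t 0 := by
  have h := integral_Ioi_of_hasDerivAt_of_tendsto (f := Pf Km KI t) (f' := Hf' Km KI t)
    (a := 0) (m := 0)
    (hasDerivAt_Pf t 0).continuousAt.continuousWithinAt
    (fun u _ => hasDerivAt_Pf t u)
    (integrableOn_Hf' hKm hKI ht)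
    (tendsto_Pf hKm hKI ht)
  rw [h]
  ring

noncomputable def Rf (Km KI t : ℝ) : ℝ := ∫ u in Ioi (0:ℝ), Hf Km KI t u
noncomputable def ff (Km KI t : ℝ) : ℝ := 1 - (1/2) * Rf Km KI t + t * Hf Km KI t 0
noncomputable def Df (Km KI t : ℝ) : ℝ :=
  (1/2) * Pf Km KI t 0 + (1 * Hf Km KI t 0 + t * Hf' Km KI t 0)

lemma hasDerivAt_Rf (hKm : 0 ≤ Km) (hKI : 0 ≤ KI) {t₀ : ℝ} (ht : t₀ ∈ Ioo (0:ℝ) 2) :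
    HasDerivAt (Rf Km KI) (- Pf Km KI t₀ 0) t₀ := by
  obtain ⟨ht0, ht2⟩ := ht
  set ε := min t₀ (2 - t₀) with hε
  have hε0 : 0 < ε := by
    apply lt_min ht0; linarith
  have hball : ∀ x ∈ Metric.ball t₀ ε, x ∈ Icc (0:ℝ) 2 := by
    intro x hx
    simp only [Metric.mem_ball, Real.dist_eq] at hx
    have h1 := abs_lt.1 hx
    have h2 : ε ≤ t₀ := min_le_left _ _
    have h3 : ε ≤ 2 - t₀ := min_le_right _ _
    constructor <;> linarith [h1.1, h1.2]
  have key := hasDerivAt_integral_of_dominated_loc_of_deriv_le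
    (μ := volume.restrict (Ioi (0:ℝ))) (F := fun t u => Hf Km KI t u)
    (F' := fun t u => Hf' Km KI t u) (x₀ := t₀)
    (bound := fun u => Cb Km KI * dcy u) (Metric.ball_mem_nhds t₀ hε0)
    (Eventually.of_forall fun t => (continuous_Hf_u t).aestronglyMeasurable)
    (integrableOn_Hf hKm hKI ⟨ht0.le, ht2.le⟩)
    (continuous_Hf'_u t₀).aestronglyMeasurable
    ?_ (integrable_dcy _) ?_
  · exact key.2.congr_deriv (by rw [integral_Hf'_eq hKm hKI ⟨ht0.le, ht2.le⟩])
  · rw [ae_restrict_iff' measurableSet_Ioi]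
    apply ae_of_all
    intro u hu t hti
    rw [Real.norm_eq_abs]
    exact (master_bound hKm hKI (hball t hti) (le_of_lt hu)).2.1
  · apply ae_of_all
    intro u t _
    exact hasDerivAt_Hf hKm t u

lemma hasDerivAt_ff (hKm : 0 ≤ Km) (hKI : 0 ≤ KI) {t : ℝ} (ht : t ∈ Ioo (0:ℝ) 2) :
    HasDerivAt (ff Km KI) (Df Km KI t) t := by
  have h1 := hasDerivAt_Rf hKm hKI ht
  have h2 := (hasDerivAt_id t).mul (hasDerivAt_Hf hKm (KI := KI) t 0)
  have h3 := ((hasDerivAt_const t (1:ℝ)).sub (h1.const_mul (1/2))).add h2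
  have : HasDerivAt (ff Km KI) (0 - (1/2) * (- Pf Km KI t 0) + (1 * Hf Km KI t 0 + t * Hf' Km KI t 0)) t := h3
  convert this using 1
  unfold Df
  ring

lemma Df_pos (hKm : 0 ≤ Km) (hKI : 0 ≤ KI) {t : ℝ} (ht : t ∈ Ioo (0:ℝ) 1) :
    0 < Df Km KI t := by
  obtain ⟨ht0, ht1⟩ := ht
  have h1t : (0:ℝ) ≤ 1 - t := by linarith
  have hprod : 0 ≤ Km * (1-t) * KI * t :=
    mul_nonneg (mul_nonneg (mul_nonneg hKm h1t) hKI) ht0.le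
  have hKIt : 0 ≤ KI * t := mul_nonneg hKI ht0.le
  have hKmt : 0 ≤ Km * t := mul_nonneg hKm ht0.le
  have hKI1t : 0 ≤ KI * (1-t) := mul_nonneg hKI h1t
  have hKm1t : 0 ≤ Km * (1-t) := mul_nonneg hKm h1t
  have hq : 0 ≤ wf Km KI t 0 := by
    unfold wf αf βf
    nlinarith
  have hDf : Df Km KI t = Real.exp (-(0 + αf Km t + βf KI t)/2) *
      ((1 + (1-t)*KI + t*Km) * g0 (wf Km KI t 0) + (2*Km*KI*t*(1-t)) * g1 (wf Km KI t 0)) := by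
    unfold Df Pf Hf Hf' αf βf
    ring
  rw [hDf]
  apply mul_pos (Real.exp_pos _)
  apply add_pos_of_pos_of_nonneg
  · apply mul_pos _ (g0_pos hq)
    nlinarith
  · apply mul_nonneg _ (g1_nonneg hq)
    nlinarith [hprod]

end Main

end StmtAux


namespace StmtAux

section Bridge

variable {Km KI : ℝ}

lemma besselI0_eq (x : ℝ) : besselI0 x = g0 (x^2/4) := by
  unfold besselI0 g0 S c0
  apply tsum_congr
  intro n
  ring

lemma marcumQ_eq (hKm : 0 ≤ Km) (hKI : 0 ≤ KI) {t : ℝ} (ht : 0 < t) (ht1 : t ≤ 1) :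
    marcumQ (Real.sqrt (αf Km t)) (Real.sqrt (βf KI t)) = (1/2) * Rf Km KI t := by
  have hα : 0 ≤ αf Km t := by unfold αf; nlinarith
  have hβ : 0 ≤ βf KI t := by unfold βf; nlinarith
  set α := αf Km t with hαd
  set β := βf KI t with hβd
  have himg : (fun u => Real.sqrt (u + β)) '' (Ioi 0) = Ioi (Real.sqrt β) := by
    ext x
    simp only [mem_image, mem_Ioi]
    constructor
    · rintro ⟨u, hu, rfl⟩
      exact Real.sqrt_lt_sqrt hβ (by linarith)
    · intro hx
      have hx0 : 0 ≤ x := le_trans (Real.sqrt_nonneg β) hx.le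
      refine ⟨x^2 - β, ?_, ?_⟩
      · have h1 : Real.sqrt β ^ 2 < x ^ 2 := by
          apply pow_lt_pow_left₀ hx (Real.sqrt_nonneg β)
          norm_num
        rw [Real.sq_sqrt hβ] at h1
        linarith
      · rw [sub_add_cancel, Real.sqrt_sq hx0]
  have hderiv : ∀ u ∈ Ioi (0:ℝ), HasDerivWithinAt (fun u => Real.sqrt (u + β))
      (1/(2*Real.sqrt (u + β))) (Ioi 0) u := by
    intro u hu
    have h1 : (0:ℝ) < u + β := by
      have := mem_Ioi.1 hu
      linarith
    have h2 := (Real.hasDerivAt_sqrt h1.ne').comp u ((hasDerivAt_id u).add_const β)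
    have h3 : HasDerivAt (fun u : ℝ => Real.sqrt (u + β)) (1/(2*Real.sqrt (u + β))) u := by
      exact h2.congr_deriv (by ring)
    exact h3.hasDerivWithinAt
  have hinj : InjOn (fun u => Real.sqrt (u + β)) (Ioi 0) := by
    intro a ha b hb h
    simp only [mem_Ioi] at ha hb
    have := (Real.sqrt_inj (by linarith) (by linarith)).1 h
    linarith
  unfold marcumQ
  rw [← himg, integral_image_eq_integral_abs_deriv_smul measurableSet_Ioi hderiv hinj]
  rw [show (1:ℝ)/2 * Rf Km KI t = ∫ u in Ioi (0:ℝ), (1/2) * Hf Km KI t u by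
    rw [Rf, MeasureTheory.integral_const_mul]]
  apply setIntegral_congr_fun measurableSet_Ioi
  intro u hu
  have h1 : (0:ℝ) < u + β := by
    have := mem_Ioi.1 hu
    linarith
  have hsq : Real.sqrt (u + β) ^ 2 = u + β := Real.sq_sqrt h1.le
  have hsne : Real.sqrt (u + β) ≠ 0 := by
    intro h
    rw [h] at hsq
    simp at hsq
    linarith
  have hbes : besselI0 (Real.sqrt α * Real.sqrt (u + β)) = g0 (wf Km KI t u) := by
    rw [besselI0_eq]
    congr 1
    rw [mul_pow, Real.sq_sqrt hα, hsq]
    unfold wf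
    rw [← hαd, ← hβd]
  simp only [smul_eq_mul]
  rw [hbes]
  rw [abs_of_pos (by positivity : (0:ℝ) < 1/(2*Real.sqrt (u + β)))]
  unfold Hf
  rw [Real.sq_sqrt hα, hsq]
  rw [show -(u + β + α)/2 = -(u + α + β)/2 by ring]
  field_simp
  ring

lemma pLL_eq (γt : ℝ) (hγt : 0 < γt) (hKm : 0 ≤ Km) (hKI : 0 ≤ KI) {v : ℝ} (hv : 0 ≤ v) :
    pLL γt Km KI v = ff Km KI (γt/(v+γt)) := by
  have hvγ : 0 < v + γt := by linarith
  set t := γt/(v+γt) with htd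
  have ht0 : 0 < t := by positivity
  have ht1 : t ≤ 1 := by
    rw [htd, div_le_one hvγ]
    linarith
  have hα : 0 ≤ αf Km t := by unfold αf; nlinarith
  have hβ : 0 ≤ βf KI t := by unfold βf; nlinarith
  have hA : Afun Km γt v = Real.sqrt (αf Km t) := by
    unfold Afun αf
    congr 1
    rw [htd]
    field_simp
    ring
  have hB : Bfun KI γt v = Real.sqrt (βf KI t) := by
    unfold Bfun βf
    congr 1
    rw [htd]
    field_simp
  unfold pLL ff
  rw [hA, hB, marcumQ_eq hKm hKI ht0 ht1]
  have hlast : γt / (v + γt) * Real.exp (-(Real.sqrt (αf Km t) ^ 2 + Real.sqrt (βf KI t) ^ 2) / 2) *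
      besselI0 (Real.sqrt (αf Km t) * Real.sqrt (βf KI t)) = t * Hf Km KI t 0 := by
    rw [← htd]
    unfold Hf
    rw [besselI0_eq]
    rw [Real.sq_sqrt hα, Real.sq_sqrt hβ, mul_pow, Real.sq_sqrt hα, Real.sq_sqrt hβ]
    have hwf : wf Km KI t 0 = αf Km t * βf KI t / 4 := by
      unfold wf
      ring
    rw [hwf]
    rw [show -(0 + αf Km t + βf KI t)/2 = -(αf Km t + βf KI t)/2 by ring]
    ring
  rw [hlast]

end Bridge

lemma strictMonoOn_ff (hKm : 0 ≤ Km) (hKI : 0 ≤ KI) :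
    StrictMonoOn (ff Km KI) (Ioc (0:ℝ) 1) := by
  apply strictMonoOn_of_deriv_pos (convex_Ioc (0:ℝ) 1)
  · intro t ht
    exact (hasDerivAt_ff hKm hKI ⟨ht.1, lt_of_le_of_lt ht.2 one_lt_two⟩).continuousAt.continuousWithinAt
  · rw [interior_Ioc]
    intro t ht
    rw [(hasDerivAt_ff hKm hKI ⟨ht.1, ht.2.trans one_lt_two⟩).deriv]
    exact Df_pos hKm hKI ht

end StmtAux


theorem stmt_10 (γt Km KI : ℝ) (hγt : 0 < γt) (hKm : 0 ≤ Km) (hKI : 0 ≤ KI) :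
    StrictAntiOn (pLL γt Km KI) (Set.Ici 0) := by
  intro v₁ h₁ v₂ h₂ h12
  have h₁' : (0:ℝ) ≤ v₁ := h₁
  have h₂' : (0:ℝ) ≤ v₂ := h₂
  rw [StmtAux.pLL_eq γt hγt hKm hKI h₁', StmtAux.pLL_eq γt hγt hKm hKI h₂']
  have hvγ1 : 0 < v₁ + γt := by linarith
  have hvγ2 : 0 < v₂ + γt := by linarith
  have ht2 : γt/(v₂+γt) ∈ Ioc (0:ℝ) 1 := by
    constructor
    · positivity
    · rw [div_le_one hvγ2]; linarith
  have ht1 : γt/(v₁+γt) ∈ Ioc (0:ℝ) 1 := by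
    constructor
    · positivity
    · rw [div_le_one hvγ1]; linarith
  apply StmtAux.strictMonoOn_ff hKm hKI ht2 ht1
  exact div_lt_div_of_pos_left hγt hvγ1 (by linarith)
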